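/- Let A and B be symmetric positive semidefinite matrices with A positive definite, and suppose det(A + B) ≤ (1 + γ) det(A) for some γ > 0. Then γ·A − B is positive semidefinite, i.e., A ⪰ (1/γ)B. -/

import Mathlib

open Matrix

lemma key_det_bound {n : ℕ} (M : Matrix (Fin n) (Fin n) ℝ) (hM : M.PosSemidef) (γ : ℝ)
    (hγ : 0 < γ) (hdet : (1 + M).det ≤ 1 + γ) :
    (γ • (1 : Matrix (Fin n) (Fin n) ℝ) - M).PosSemidef := by
  classical
  have hH : M.IsHermitian := hM.1
  set V : Matrix (Fin n) (Fin n) ℝ := (hH.eigenvectorUnitary : Matrix (Fin n) (Fin n) ℝ) with hV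
  have hVV : V * Vᴴ = 1 := by
    rw [← Matrix.star_eq_conjTranspose]
    exact (Matrix.mem_unitaryGroup_iff).mp hH.eigenvectorUnitary.2
  have hspec : M = V * diagonal hH.eigenvalues * Vᴴ := by
    have := hH.spectral_theorem
    simpa [Matrix.star_eq_conjTranspose] using this
  have hconjdet : ∀ X : Matrix (Fin n) (Fin n) ℝ, (V * X * Vᴴ).det = X.det := by
    intro X
    rw [det_mul, det_mul]
    calc V.det * X.det * Vᴴ.det = X.det * (V.det * Vᴴ.det) := by ring
    _ = X.det * (V * Vᴴ).det := by rw [det_mul]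
    _ = X.det := by rw [hVV, det_one, mul_one]
  have h1M : 1 + M = V * (diagonal (fun i => 1 + hH.eigenvalues i)) * Vᴴ := by
    have : diagonal (fun i => 1 + hH.eigenvalues i)
        = 1 + diagonal hH.eigenvalues := by
      rw [← diagonal_one, diagonal_add]
    rw [this, mul_add, add_mul, mul_one, hVV, ← hspec]
  have hdet1 : (1 + M).det = ∏ i, (1 + hH.eigenvalues i) := by
    rw [h1M, hconjdet, det_diagonal]
  have hev : ∀ i, hH.eigenvalues i ≤ γ := by
    intro i
    have hle : ∏ j, (if j = i then 1 + hH.eigenvalues i else (1:ℝ))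
        ≤ ∏ j, (1 + hH.eigenvalues j) := by
      apply Finset.prod_le_prod
      · intro j _
        split <;> [skip; norm_num] <;> linarith [hM.eigenvalues_nonneg i]
      · intro j _
        split
        · next h => rw [h]
        · linarith [hM.eigenvalues_nonneg j]
    simp only [Finset.prod_ite_eq', Finset.mem_univ, if_true] at hle
    rw [← hdet1] at hle
    linarith
  have hsub : γ • (1 : Matrix (Fin n) (Fin n) ℝ) - M
      = V * (diagonal (fun i => γ - hH.eigenvalues i)) * Vᴴ := by
    have : diagonal (fun i => γ - hH.eigenvalues i)
        = γ • (1 : Matrix (Fin n) (Fin n) ℝ) - diagonal hH.eigenvalues := by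
      rw [← diagonal_one, ← diagonal_smul, diagonal_sub]
      congr 1
      funext i
      simp
    rw [this, mul_sub, sub_mul, ← hspec, mul_smul_comm, smul_mul_assoc, mul_one, hVV]
  rw [hsub]
  exact (posSemidef_diagonal_iff.mpr (fun i => by linarith [hev i])).mul_mul_conjTranspose_same V

theorem det_ratio_le_implies_loewner {n : ℕ} (A B : Matrix (Fin n) (Fin n) ℝ)
    (hA : A.PosDef) (hB : B.PosSemidef) (γ : ℝ) (hγ : 0 < γ)
    (hdet : (A + B).det ≤ (1 + γ) * A.det) :
    (γ • A - B).PosSemidef := by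
  classical
  have hAinv : (A⁻¹).PosDef := hA.inv
  set T : Matrix (Fin n) (Fin n) ℝ := (open MatrixOrder in CFC.sqrt A⁻¹) with hT
  have hTpsd : T.PosSemidef := (open MatrixOrder in (CFC.sqrt_nonneg A⁻¹).posSemidef)
  have hTT : T * T = A⁻¹ := (open MatrixOrder in CFC.sqrt_mul_sqrt_self A⁻¹ (Matrix.PosSemidef.nonneg hAinv.posSemidef))
  have hAdet : (0:ℝ) < A.det := hA.det_pos
  have hAinvmul : A * A⁻¹ = 1 := Matrix.mul_nonsing_inv A (isUnit_iff_ne_zero.mpr hAdet.ne')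
  have hinvAmul : A⁻¹ * A = 1 := Matrix.nonsing_inv_mul A (isUnit_iff_ne_zero.mpr hAdet.ne')
  have hcomm : T * A = A * T := by
    have h1 : T * A⁻¹ = A⁻¹ * T := by rw [← hTT, mul_assoc]
    calc T * A = 1 * (T * A) := by rw [one_mul]
    _ = A * A⁻¹ * (T * A) := by rw [hAinvmul]
    _ = A * (A⁻¹ * T) * A := by noncomm_ring
    _ = A * (T * A⁻¹) * A := by rw [h1]
    _ = A * T * (A⁻¹ * A) := by noncomm_ring
    _ = A * T := by rw [hinvAmul, mul_one]
  have hTAT : T * A * T = 1 := by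
    rw [hcomm, mul_assoc, hTT, hAinvmul]
  set M : Matrix (Fin n) (Fin n) ℝ := T * B * Tᴴ with hM
  have hMpsd : M.PosSemidef := hB.mul_mul_conjTranspose_same T
  have hTh : Tᴴ = T := hTpsd.1
  have hone : (1 : Matrix (Fin n) (Fin n) ℝ) + M = T * (A + B) * T := by
    rw [hM, hTh, mul_add, add_mul, hTAT]
  have hdetT : T.det * T.det = A.det⁻¹ := by
    have := congrArg Matrix.det hTT
    rw [det_mul, Matrix.det_nonsing_inv] at this
    simpa [Ring.inverse_eq_inv'] using this
  have hdetM : ((1 : Matrix (Fin n) (Fin n) ℝ) + M).det ≤ 1 + γ := by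
    rw [hone, det_mul, det_mul]
    have : T.det * (A + B).det * T.det = (A + B).det * A.det⁻¹ := by
      rw [mul_comm T.det, mul_assoc, hdetT]
    rw [this]
    calc (A + B).det * A.det⁻¹ ≤ (1 + γ) * A.det * A.det⁻¹ :=
        mul_le_mul_of_nonneg_right hdet (by positivity)
      _ = 1 + γ := by field_simp
  have hkey := key_det_bound M hMpsd γ hγ hdetM
  -- γ • A - B = (A * T) * (γ • 1 - M) * (A * T)ᴴ
  have hconj : γ • A - B = (A * T) * (γ • (1 : Matrix (Fin n) (Fin n) ℝ) - M) * (A * T)ᴴ := by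
    have hATh : (A * T)ᴴ = T * A := by
      rw [conjTranspose_mul, hTh, hA.isHermitian.eq]
    rw [hATh, mul_sub, sub_mul, hM, hTh]
    have h1 : A * T * (γ • (1 : Matrix (Fin n) (Fin n) ℝ)) * (T * A) = γ • A := by
      rw [mul_smul_comm, mul_one, smul_mul_assoc, mul_assoc, ← mul_assoc T T, hTT,
        ← mul_assoc, mul_assoc A, hinvAmul]  -- careful
      rw [mul_one]
    have h2 : A * T * (T * B * T) * (T * A) = B := by
      calc A * T * (T * B * T) * (T * A) = (A * (T * T)) * B * ((T * T) * A) := by noncomm_ring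
      _ = B := by rw [hTT, hAinvmul, hinvAmul, one_mul, mul_one]
    rw [h1, h2]
  rw [hconj]
  exact hkey.mul_mul_conjTranspose_same (A * T)
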